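/- If U is a nonempty open subset of a topological group G, then the open cover 𝒰 = {g·U : g ∈ G} of G admits a 𝒰-small partition of unity. -/

import Mathlib

noncomputable section
open Set Topology TopologicalSpace
open scoped Pointwise

/-- `𝒰` is an open cover of `X`. -/
def IsOpenCover {X : Type} [TopologicalSpace X] (𝒰 : Set (Set X)) : Prop :=
  (∀ U ∈ 𝒰, IsOpen U) ∧ ⋃₀ 𝒰 = univ

/-- Star of a point with respect to a family of sets. -/
def ptStar {X : Type} (x : X) (𝒰 : Set (Set X)) : Set X := ⋃₀ {U | U ∈ 𝒰 ∧ x ∈ U}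

/-- Star of a set with respect to a family of sets. -/
def setStar {X : Type} (A : Set X) (𝒰 : Set (Set X)) : Set X :=
  ⋃₀ {U | U ∈ 𝒰 ∧ (U ∩ A).Nonempty}

/-- `𝒱` star-refines `𝒰`. -/
def StarRefines {X : Type} (𝒱 𝒰 : Set (Set X)) : Prop :=
  ∀ x : X, ∃ U ∈ 𝒰, ptStar x 𝒱 ⊆ U

/-- A continuous partition of unity viewed as a map into `l¹(S)` with image in `Δ(S)`. -/
def IsPU {X S : Type} [TopologicalSpace X] (f : X → lp (fun _ : S => ℝ) 1) : Prop :=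
  Continuous f ∧ ∀ x : X, (∀ s : S, 0 ≤ f x s) ∧ HasSum (fun s => f x s) 1

/-- The partition of unity `f` is `𝒰`-small: each carrier lies in a member of `𝒰`. -/
def IsUSmall {X S : Type} [TopologicalSpace X] (𝒰 : Set (Set X))
    (f : X → lp (fun _ : S => ℝ) 1) : Prop :=
  ∀ s : S, ∃ U ∈ 𝒰, {x : X | f x s ≠ 0} ⊆ U

/-- There exists a `𝒰`-small partition of unity on `X`. -/
def ExistsUSmallPU {X : Type} [TopologicalSpace X] (𝒰 : Set (Set X)) : Prop :=
  ∃ (S : Type) (f : X → lp (fun _ : S => ℝ) 1), IsPU f ∧ IsUSmall 𝒰 f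

/-- An indexed family of sets is discrete. -/
def DiscreteFam {X S : Type} [TopologicalSpace X] (A : S → Set X) : Prop :=
  ∀ x : X, ∃ N ∈ nhds x, {s : S | (A s ∩ N).Nonempty}.Subsingleton

/-- A family of sets (as a set of sets) is discrete. -/
def DiscreteSetFam {X : Type} [TopologicalSpace X] (𝒜 : Set (Set X)) : Prop :=
  ∀ x : X, ∃ N ∈ nhds x, {A | A ∈ 𝒜 ∧ (A ∩ N).Nonempty}.Subsingleton

/-- `𝒰` has a σ-discrete closed refinement. -/
def HasSigmaDiscreteClosedRefinement {X : Type} [TopologicalSpace X]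
    (𝒰 : Set (Set X)) : Prop :=
  ∃ D : ℕ → Set (Set X), (∀ n, DiscreteSetFam (D n)) ∧
    (∀ n, ∀ F ∈ D n, IsClosed F) ∧
    (∀ n, ∀ F ∈ D n, ∃ U ∈ 𝒰, F ⊆ U) ∧
    ⋃₀ (⋃ n, D n) = univ

/-- `X` is collectionwise normal. -/
def CwNormal (X : Type) [TopologicalSpace X] : Prop :=
  ∀ (S : Type) (A : S → Set X), (∀ s, IsClosed (A s)) → DiscreteFam A →
    ∃ V : S → Set X, (∀ s, IsOpen (V s)) ∧ (∀ s, A s ⊆ V s) ∧ DiscreteFam V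


open Function Filter
open scoped NNReal ENNReal

section AuxPU
variable {ι Y : Type} [TopologicalSpace Y]

variable {ι Y : Type} [TopologicalSpace Y]

open scoped Classical in
theorem pu_to_lp (ρ : PartitionOfUnity ι Y univ) :
    ∃ g : Y → lp (fun _ : ι => ℝ) 1, Continuous g ∧
      (∀ y, (∀ i, 0 ≤ g y i) ∧ HasSum (fun i => g y i) 1) ∧
      ∀ i, {y | g y i ≠ 0} ⊆ Function.support (ρ i) := by
  have hs : ∀ y : Y, HasSum (fun i => ρ i y) 1 := by
    intro y
    have h0 : ∀ i ∉ ρ.finsupport y, ρ i y = 0 := by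
      intro i hi
      by_contra h
      exact hi ((ρ.mem_finsupport y).2 (by simpa [Function.mem_support] using h))
    have := hasSum_sum_of_ne_finset_zero (s := ρ.finsupport y) (f := fun i => ρ i y) (L := SummationFilter.unconditional ι) h0
    rwa [ρ.sum_finsupport (mem_univ y)] at this
  have hmem : ∀ y : Y, Memℓp (fun i => ρ i y) 1 := by
    intro y
    apply memℓp_gen
    have : Summable fun i => ρ i y := (hs y).summable
    simpa [Real.norm_of_nonneg (ρ.nonneg _ y)] using this
  refine ⟨fun y => ⟨fun i => ρ i y, hmem y⟩, ?_, fun y => ⟨fun i => ρ.nonneg i y, hs y⟩,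
    fun i y hy => by simpa [Function.mem_support] using hy⟩
  -- continuity
  have hp : (0:ℝ) < (1 : ℝ≥0∞).toReal := by norm_num
  have hsingle_sub : ∀ (i : ι) (a b : ℝ),
      lp.single (E := fun _ : ι => ℝ) 1 i (a - b) = lp.single 1 i a - lp.single 1 i b := by
    intro i a b
    apply lp.ext
    funext j
    by_cases h : j = i
    · subst h; simp [lp.single_apply_self]
    · simp [lp.single_apply_ne _ _ _ h]
  have hiso : ∀ i : ι, Isometry (fun a : ℝ => lp.single (E := fun _ : ι => ℝ) 1 i a) := by
    intro i
    refine Isometry.of_dist_eq fun a b => ?_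
    rw [dist_eq_norm, dist_eq_norm, ← hsingle_sub]
    simpa using lp.norm_single (E := fun _ : ι => ℝ) (p := 1) one_pos i (a - b)
  rw [continuous_iff_continuousAt]
  intro y₀
  obtain ⟨I, hI⟩ := ρ.exists_finset_nhds y₀
  have hF : Continuous fun y => ∑ i ∈ I, lp.single (E := fun _ : ι => ℝ) 1 i (ρ i y) := by
    apply continuous_finset_sum
    intro i _
    exact ((hiso i).continuous).comp (ρ i).continuous
  refine hF.continuousAt.congr (hI.mono fun y hy => ?_)
  apply lp.ext
  funext j
  have hco : (∑ i ∈ I, lp.single (E := fun _ : ι => ℝ) 1 i (ρ i y)) j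
      = if j ∈ I then ρ j y else 0 := by
    simp only [lp.coeFn_sum, Finset.sum_apply, lp.single_apply, Finset.sum_dite_eq, Pi.single_apply, Finset.sum_ite_eq]
  rw [hco]
  show _ = ρ j y
  by_cases hj : j ∈ I
  · simp [hj]
  · have : ρ j y = 0 := by
      by_contra h
      exact hj (hy.2 (by simpa [Function.mem_support] using h))
    simp [hj, this]

end AuxPU

theorem lemB {X Y : Type} [TopologicalSpace X] [PseudoMetricSpace Y] (π : X → Y)
    (hπ : Continuous π) (𝒰 : Set (Set X)) (r : ℝ) (hr : 0 < r)
    (hcov : ∀ y : Y, ∃ Uu ∈ 𝒰, π ⁻¹' (Metric.ball y r) ⊆ Uu) :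
    ExistsUSmallPU 𝒰 := by
  obtain ⟨ρ, hρ⟩ := PartitionOfUnity.exists_isSubordinate (ι := SeparationQuotient Y)
    (X := SeparationQuotient Y) isClosed_univ (fun i => Metric.ball i r)
    (fun i => Metric.isOpen_ball)
    (fun m _ => mem_iUnion.2 ⟨m, Metric.mem_ball_self hr⟩)
  obtain ⟨g, hgc, hgp, hgs⟩ := pu_to_lp ρ
  set q : X → SeparationQuotient Y := fun x => SeparationQuotient.mk (π x) with hq
  have hqc : Continuous q := SeparationQuotient.continuous_mk.comp hπ
  refine ⟨SeparationQuotient Y, fun x => g (q x),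
    ⟨hgc.comp hqc, fun x => hgp (q x)⟩, ?_⟩
  intro i
  obtain ⟨y, rfl⟩ := SeparationQuotient.surjective_mk i
  obtain ⟨Uu, hU, hsub⟩ := hcov y
  refine ⟨Uu, hU, fun x hx => hsub ?_⟩
  have h2 : q x ∈ Metric.ball (SeparationQuotient.mk y) r :=
    hρ _ (subset_tsupport _ (hgs _ hx))
  have : dist (π x) y < r := by
    rw [← SeparationQuotient.dist_mk]
    exact h2
  exact this


def GCopy (G : Type) : Type := G

section Grp
variable {G : Type} [Group G] [TopologicalSpace G] [IsTopologicalGroup G]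

theorem chain_exists {W : Set G} (hW : W ∈ 𝓝 (1 : G)) :
    ∃ V : ℕ → Set G, (∀ n, V n ∈ 𝓝 (1 : G)) ∧ (∀ n, (V n)⁻¹ = V n) ∧ (∀ n, (1:G) ∈ V n) ∧
      (∀ n, V (n+1) * V (n+1) * V (n+1) ⊆ V n) ∧ V 0 ⊆ W := by
  have step : ∀ A : Set G, A ∈ 𝓝 (1:G) →
      ∃ B : Set G, B ∈ 𝓝 (1:G) ∧ B⁻¹ = B ∧ (1:G) ∈ B ∧ B * B * B ⊆ A := by
    intro A hA
    obtain ⟨C, hCo, hC1, hCC⟩ := exists_open_nhds_one_mul_subset hA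
    obtain ⟨D, hDo, hD1, hDD⟩ := exists_open_nhds_one_mul_subset (hCo.mem_nhds hC1)
    have hDC : D ⊆ C := fun d hd => by simpa using hDD (Set.mul_mem_mul hd hD1)
    refine ⟨D ∩ D⁻¹, Filter.inter_mem (hDo.mem_nhds hD1) (inv_mem_nhds_one G (hDo.mem_nhds hD1)),
      ?_, ⟨hD1, by simpa using hD1⟩, ?_⟩
    · ext a; simp [Set.mem_inv]; tauto
    · intro a ha
      obtain ⟨bc, hbc, d, hd, rfl⟩ := ha
      obtain ⟨b, hb, c, hc, rfl⟩ := hbc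
      exact hCC (Set.mul_mem_mul (hDD (Set.mul_mem_mul hb.1 hc.1)) (hDC hd.1))
  choose! st h1 h2 h3 h4 using step
  set V : ℕ → Set G := fun n => Nat.rec (st W) (fun _ ih => st ih) n with hV
  have hVmem : ∀ n, V n ∈ 𝓝 (1:G) := by
    intro n; induction n with
    | zero => exact h1 W hW
    | succ n ih => exact h1 _ ih
  refine ⟨V, hVmem, fun n => ?_, fun n => ?_, fun n => ?_, ?_⟩
  · cases n with
    | zero => exact h2 W hW
    | succ n => exact h2 _ (hVmem n)
  · cases n with
    | zero => exact h3 W hW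
    | succ n => exact h3 _ (hVmem n)
  · exact h4 _ (hVmem n)
  · intro b hb
    have := h4 W hW (Set.mul_mem_mul (Set.mul_mem_mul hb (h3 W hW)) (h3 W hW))
    simpa using this


open scoped Classical in
theorem metric_facts {G : Type} [Group G] [TopologicalSpace G] [IsTopologicalGroup G]
    {W : Set G} (hW : W ∈ 𝓝 (1 : G)) :
    ∃ (m : PseudoMetricSpace (GCopy G)),
      (@Continuous G (GCopy G) _ m.toUniformSpace.toTopologicalSpace (fun x => (x : GCopy G))) ∧
      (∀ y z : G, @dist (GCopy G) m.toDist (y : GCopy G) (z : GCopy G) < 2⁻¹ → y⁻¹ * z ∈ W) := by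
  obtain ⟨V, hVmem, hVsym, hV1, hVcube, hVW⟩ := chain_exists hW
  -- monotonicity
  have hstep : ∀ n, V (n+1) ⊆ V n := by
    intro n a ha
    have := hVcube n (Set.mul_mem_mul (Set.mul_mem_mul ha (hV1 (n+1))) (hV1 (n+1)))
    simpa using this
  have hmono : ∀ {m n : ℕ}, m ≤ n → V n ⊆ V m := by
    intro m n h
    induction h with
    | refl => exact fun _ h => h
    | step h ih => exact fun a ha => ih (hstep _ ha)
  -- the pre-distance
  set t : ℕ → ℝ≥0 := fun n => (2⁻¹ : ℝ≥0) ^ (n+1) with ht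
  have h21 : (2⁻¹ : ℝ≥0) < 1 := by
    rw [← NNReal.coe_lt_coe]; norm_num
  have htanti : ∀ {m n : ℕ}, m ≤ n → t n ≤ t m := fun {m n} h =>
    pow_le_pow_of_le_one (by positivity) h21.le (Nat.succ_le_succ h)
  have htlt : ∀ {m n : ℕ}, t m < t n → n < m := by
    intro m n h
    by_contra hc
    exact absurd (htanti (not_lt.1 hc)) (not_le.2 h)
  have ht1 : ∀ n, t n ≤ 1 := fun n => pow_le_one₀ (by positivity) h21.le
  have htpos : ∀ n, 0 < t n := fun n => pow_pos (by rw [← NNReal.coe_lt_coe]; norm_num) _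
  have hsmall : ∀ c : ℝ≥0, c ≠ 0 → ∃ n, t n < c := by
    intro c hc
    obtain ⟨j, hj⟩ := exists_pow_lt_of_lt_one (pos_iff_ne_zero.2 hc) h21
    exact ⟨j, lt_of_le_of_lt (pow_le_pow_of_le_one (by positivity) h21.le (Nat.le_succ j)) hj⟩
  set e : G → G → ℝ≥0 := fun x y => ⨅ n, if x⁻¹ * y ∈ V n then t n else 1 with he
  have key1 : ∀ x y n, x⁻¹ * y ∈ V n → e x y ≤ t n := by
    intro x y n h
    exact (ciInf_le (OrderBot.bddBelow _) n).trans_eq (if_pos h)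
  have he1 : ∀ x y, e x y ≤ 1 := by
    intro x y
    refine (ciInf_le (OrderBot.bddBelow _) 0).trans ?_
    split
    · exact ht1 0
    · exact le_rfl
  have key2 : ∀ x y (c : ℝ≥0), c ≤ 1 → e x y < c → ∃ n, x⁻¹ * y ∈ V n ∧ t n < c := by
    intro x y c hc h
    obtain ⟨n, hn⟩ := exists_lt_of_ciInf_lt h
    by_cases hb : x⁻¹ * y ∈ V n
    · exact ⟨n, hb, by rwa [if_pos hb] at hn⟩
    · rw [if_neg hb] at hn
      exact absurd hc (not_le.2 hn)
  have key2' : ∀ x y n, e x y < t n → x⁻¹ * y ∈ V (n+1) := by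
    intro x y n h
    obtain ⟨k, hk, hlt⟩ := key2 x y (t n) (ht1 n) h
    exact hmono (Nat.succ_le_of_lt (htlt hlt)) hk
  have hself : ∀ x : G, e x x = 0 := by
    intro x
    by_contra hc
    obtain ⟨n, hn⟩ := hsmall _ hc
    exact absurd (key1 x x n (by simp [hV1 n])) (not_le.2 hn)
  have hcomm : ∀ x y, e x y = e y x := by
    intro x y
    refine iInf_congr fun n => ?_
    have hiff : (x⁻¹ * y ∈ V n) ↔ (y⁻¹ * x ∈ V n) := by
      constructor <;> intro h
      · rw [show y⁻¹ * x = (x⁻¹ * y)⁻¹ by group, ← hVsym n]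
        exact Set.inv_mem_inv.2 h
      · rw [show x⁻¹ * y = (y⁻¹ * x)⁻¹ by group, ← hVsym n]
        exact Set.inv_mem_inv.2 h
    rw [hiff]
  -- quadrilateral inequality
  have claim : ∀ x₁ x₂ x₃ x₄ n, max (e x₁ x₂) (max (e x₂ x₃) (e x₃ x₄)) < t n →
      e x₁ x₄ ≤ t n := by
    intro x₁ x₂ x₃ x₄ n h
    have h12 := key2' x₁ x₂ n (lt_of_le_of_lt (le_max_left _ _) h)
    have h23 := key2' x₂ x₃ n (lt_of_le_of_lt ((le_max_left _ _).trans (le_max_right _ _)) h)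
    have h34 := key2' x₃ x₄ n (lt_of_le_of_lt ((le_max_right _ _).trans (le_max_right _ _)) h)
    have : x₁⁻¹ * x₄ ∈ V n := by
      have := hVcube n (Set.mul_mem_mul (Set.mul_mem_mul h12 h23) h34)
      simpa [mul_assoc] using this
    exact key1 _ _ _ this
  have hquad : ∀ x₁ x₂ x₃ x₄ : G,
      e x₁ x₄ ≤ 2 * max (e x₁ x₂) (max (e x₂ x₃) (e x₃ x₄)) := by
    intro x₁ x₂ x₃ x₄
    set M := max (e x₁ x₂) (max (e x₂ x₃) (e x₃ x₄)) with hM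
    by_cases h1 : 1 ≤ 2 * M
    · exact (he1 _ _).trans h1
    · have hM2 : M < 2⁻¹ := by
        by_contra hc
        push_neg at hc
        exact h1 (by calc (1:ℝ≥0) = 2 * 2⁻¹ := by norm_num
                        _ ≤ 2 * M := by exact mul_le_mul_right hc 2)
      by_cases hM0 : M = 0
      · have hle : ∀ n, e x₁ x₄ ≤ t n := fun n => claim _ _ _ _ n (hM0 ▸ htpos n)
        have : e x₁ x₄ = 0 := by
          by_contra hc
          obtain ⟨n, hn⟩ := hsmall _ hc
          exact absurd (hle n) (not_le.2 hn)
        simp [this]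
      · have hex : ∃ k, t k ≤ M := by
          obtain ⟨k, hk⟩ := hsmall M hM0
          exact ⟨k, hk.le⟩
        set k₀ := Nat.find hex with hk₀
        have hspec : t k₀ ≤ M := Nat.find_spec hex
        have hk₀pos : 0 < k₀ := by
          rcases Nat.eq_zero_or_pos k₀ with h | h
          · exfalso
            have : t 0 ≤ M := h ▸ hspec
            have : (2⁻¹:ℝ≥0) ≤ M := by simpa [ht] using this
            exact absurd hM2 (not_lt.2 this)
          · exact h
        set n := k₀ - 1 with hn
        have hnk : n + 1 = k₀ := Nat.succ_pred_eq_of_pos hk₀pos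
        have hMn : M < t n := by
          have := Nat.find_min hex (m := n) (by omega)
          exact not_le.1 this
        have : e x₁ x₄ ≤ t n := claim _ _ _ _ n hMn
        calc e x₁ x₄ ≤ t n := this
          _ = 2 * t (n+1) := by
              have : (2:ℝ≥0) * t (n+1) = t n := by
                simp only [ht, pow_succ]
                rw [mul_comm (2:ℝ≥0), mul_assoc, inv_mul_cancel₀ two_ne_zero, mul_one]
              rw [this]
          _ = 2 * t k₀ := by rw [hnk]
          _ ≤ 2 * M := mul_le_mul_right hspec 2
  -- assemble the pseudometric
  set d : GCopy G → GCopy G → ℝ≥0 := fun x y => e x y with hd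
  have hdself : ∀ x : GCopy G, d x x = 0 := fun x => hself x
  have hdcomm : ∀ x y : GCopy G, d x y = d y x := fun x y => hcomm x y
  have hdquad : ∀ x₁ x₂ x₃ x₄ : GCopy G,
      d x₁ x₄ ≤ 2 * max (d x₁ x₂) (max (d x₂ x₃) (d x₃ x₄)) :=
    fun a b c dd => hquad a b c dd
  letI m : PseudoMetricSpace (GCopy G) := PseudoMetricSpace.ofPreNNDist d hdself hdcomm
  have hdist_le : ∀ x y : GCopy G, dist x y ≤ (d x y : ℝ) := fun x y =>
    PseudoMetricSpace.dist_ofPreNNDist_le d hdself hdcomm x y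
  have hle_dist : ∀ x y : GCopy G, (d x y : ℝ) ≤ 2 * dist x y := fun x y =>
    PseudoMetricSpace.le_two_mul_dist_ofPreNNDist d hdself hdcomm hdquad x y
  have hcast : ∀ k : ℕ, ((t k : ℝ≥0) : ℝ) = (2⁻¹:ℝ)^(k+1) := by
    intro k; rw [ht]; push_cast; norm_num
  refine ⟨m, ?_, ?_⟩
  · show Continuous (fun x : G => (show GCopy G from x))
    rw [continuous_iff_continuousAt]
    intro x
    rw [ContinuousAt, Metric.tendsto_nhds]
    intro ε hε
    obtain ⟨j, hj⟩ := exists_pow_lt_of_lt_one hε (by norm_num : (2⁻¹:ℝ) < 1)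
    filter_upwards [show x • V j ∈ 𝓝 x by
      simpa using smul_mem_nhds_smul x (hVmem j)] with z hz
    have hmz : x⁻¹ * z ∈ V j := by
      rwa [← smul_eq_mul, ← Set.mem_smul_set_iff_inv_smul_mem]
    have hb : ((d z x : ℝ≥0) : ℝ) ≤ (2⁻¹:ℝ)^j := by
      have he' : d z x = e x z := hcomm z x
      rw [he']
      calc ((e x z : ℝ≥0) : ℝ) ≤ ((t j : ℝ≥0) : ℝ) := by exact_mod_cast key1 x z j hmz
        _ = (2⁻¹:ℝ)^(j+1) := hcast j
        _ ≤ (2⁻¹:ℝ)^j := pow_le_pow_of_le_one (by norm_num) (by norm_num) (Nat.le_succ j)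
    exact lt_of_le_of_lt ((hdist_le z x).trans hb) hj
  · intro y z hdist
    have h2 : ((d y z : ℝ≥0) : ℝ) < 1 := lt_of_le_of_lt (hle_dist y z) (by linarith)
    have h3 : e y z < 1 := by exact_mod_cast h2
    obtain ⟨n, hn, -⟩ := key2 y z 1 le_rfl h3
    exact hVW (hmono (Nat.zero_le n) hn)

end Grp

/-- For a nonempty open `U` in a topological group `G`, the cover by translates of `U`
admits a small partition of unity. -/
theorem stmt4 (G : Type) [Group G] [TopologicalSpace G] [IsTopologicalGroup G]
    (U : Set G) (hU : IsOpen U) (hne : U.Nonempty) :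
    ExistsUSmallPU (Set.range fun g : G => g • U) := by
  obtain ⟨u, hu⟩ := hne
  set W : Set G := u⁻¹ • U with hWdef
  have hWnhd : W ∈ 𝓝 (1:G) := by
    have hWo : IsOpen W := hU.smul u⁻¹
    have h1W : (1:G) ∈ W := ⟨u, hu, by simp⟩
    exact hWo.mem_nhds h1W
  obtain ⟨m, hπc, hball⟩ := metric_facts hWnhd
  letI := m
  refine lemB (X := G) (Y := GCopy G) (fun x => (x : GCopy G)) hπc _ 2⁻¹ (by norm_num) ?_
  intro y0
  obtain ⟨y, rfl⟩ : ∃ y : G, (show GCopy G from y) = y0 := ⟨y0, rfl⟩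
  refine ⟨(y * u⁻¹) • U, ⟨y * u⁻¹, rfl⟩, ?_⟩
  intro z hz
  have h1 : y⁻¹ * z ∈ W := hball y z (lt_of_eq_of_lt (dist_comm _ _) (Metric.mem_ball.1 hz))
  have h2 : z ∈ y • W := by
    rw [Set.mem_smul_set_iff_inv_smul_mem, smul_eq_mul]
    exact h1
  rw [hWdef, smul_smul] at h2
  exact h2
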